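/- The property of being initial lifts: if β : (T,α) → (T',α') is an isomorphism in the category of (Id+H)-algebras, (T,α,⦃−⦄) is a substitution system, and (T',α') is equipped with the transported bracket ⦃f⦄' := β ∘ ⦃β^{-1}∘f⦄ ∘ (β^{-1}·Z), then the transported bracket is the unique bracket operation on (T',α') and ⦃f⦄' satisfies the substitution-system equations: ⦃f⦄' ∘ η'·Z = f and ⦃f⦄' ∘ τ'·Z = τ' ∘ H⦃f⦄' ∘ θ_{T',(Z,e)}. -/

import Mathlib

open CategoryTheory Limits

universe v u

/-- A pointed endofunctor on `C`. -/
structure Ptd (C : Type u) [Category.{v} C] where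
  Z : C ⥤ C
  e : 𝟭 C ⟶ Z

/-- A *signature* over `C`: an endofunctor `H` on the endofunctor category `[C,C]`
together with a strength `θ : (H −)·U∼ ⟶ H (−·U∼)`, natural in both variables and
satisfying the unit and composition coherence laws (here `X·Z` is the composite
`Z ⋙ X`, i.e. `A ↦ X (Z A)`). -/
structure Signature (C : Type u) [Category.{v} C] where
  H : (C ⥤ C) ⥤ (C ⥤ C)
  θ : ∀ (X : C ⥤ C) (Z : Ptd C), (Z.Z ⋙ H.obj X) ⟶ H.obj (Z.Z ⋙ X)
  θ_nat_X : ∀ {X X' : C ⥤ C} (α : X ⟶ X') (Z : Ptd C),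
      Functor.whiskerLeft Z.Z (H.map α) ≫ θ X' Z = θ X Z ≫ H.map (Functor.whiskerLeft Z.Z α)
  θ_nat_Z : ∀ (X : C ⥤ C) {Z Z' : Ptd C} (g : Z.Z ⟶ Z'.Z), Z.e ≫ g = Z'.e →
      Functor.whiskerRight g (H.obj X) ≫ θ X Z' = θ X Z ≫ H.map (Functor.whiskerRight g X)
  θ_id : ∀ X : C ⥤ C,
      θ X ⟨𝟭 C, 𝟙 (𝟭 C)⟩ =
        (Functor.leftUnitor (H.obj X)).hom ≫ H.map (Functor.leftUnitor X).inv
  θ_comp : ∀ (X : C ⥤ C) (Z Z' : Ptd C),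
      θ X ⟨Z.Z ⋙ Z'.Z, Z.e ≫ Functor.whiskerLeft Z.Z Z'.e⟩ =
        (Functor.associator Z.Z Z'.Z (H.obj X)).hom ≫
          Functor.whiskerLeft Z.Z (θ X Z') ≫ θ (Z'.Z ⋙ X) Z ≫
          H.map (Functor.associator Z.Z Z'.Z X).inv

variable {C : Type u} [Category.{v} C]

/-- A *heterogeneous substitution system* for a signature `(H, θ)`:
an `(Id + H)`-algebra, presented by its components `η : Id ⟶ T` and `τ : H T ⟶ T`,
together with, for every morphism of pointed endofunctors `f : (Z,e) ⟶ (T,η)`,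
a unique bracket `⦃f⦄ : T·Z ⟶ T` satisfying the two substitution equations. -/
structure HSS (S : Signature C) where
  T : C ⥤ C
  η : 𝟭 C ⟶ T
  τ : S.H.obj T ⟶ T
  bracket : ∀ (Z : Ptd C) (f : Z.Z ⟶ T), Z.e ≫ f = η → (Z.Z ⋙ T ⟶ T)
  bracket_η : ∀ (Z : Ptd C) (f : Z.Z ⟶ T) (hf : Z.e ≫ f = η),
      Functor.whiskerLeft Z.Z η ≫ bracket Z f hf = f
  bracket_τ : ∀ (Z : Ptd C) (f : Z.Z ⟶ T) (hf : Z.e ≫ f = η),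
      Functor.whiskerLeft Z.Z τ ≫ bracket Z f hf = S.θ T Z ≫ S.H.map (bracket Z f hf) ≫ τ
  bracket_unique : ∀ (Z : Ptd C) (f : Z.Z ⟶ T) (hf : Z.e ≫ f = η)
      (h : Z.Z ⋙ T ⟶ T),
      Functor.whiskerLeft Z.Z η ≫ h = f →
      Functor.whiskerLeft Z.Z τ ≫ h = S.θ T Z ≫ S.H.map h ≫ τ →
      h = bracket Z f hf

/-- The bracket transported along an algebra isomorphism `β : (T,α) ≅ (T',α')`:
`⦃f⦄' := β ∘ ⦃β⁻¹ ∘ f⦄ ∘ (β⁻¹ · Z)`. -/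
def transportedBracket (S : Signature C) (hss : HSS S) {T' : C ⥤ C}
    (β : hss.T ≅ T') (Z : Ptd C) (f : Z.Z ⟶ T')
    (hg : Z.e ≫ (f ≫ β.inv) = hss.η) : Z.Z ⋙ T' ⟶ T' :=
  Functor.whiskerLeft Z.Z β.inv ≫ hss.bracket Z (f ≫ β.inv) hg ≫ β.hom

/-- **Initiality-relevant transport of brackets along algebra isomorphisms:**
if `β : (T,α) ≅ (T',α')` is an isomorphism of `(Id+H)`-algebras (so
`β ∘ η = η'` and `β ∘ τ = τ' ∘ H β`), `(T,α,⦃−⦄)` is a substitution system,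
and `(T',α')` is equipped with the transported bracket
`⦃f⦄' := β ∘ ⦃β⁻¹ ∘ f⦄ ∘ (β⁻¹ · Z)`, then for every pointed
`f : (Z,e) ⟶ (T',η')` the transported bracket satisfies the two
substitution-system equations `⦃f⦄' ∘ η'·Z = f` and
`⦃f⦄' ∘ τ'·Z = τ' ∘ H ⦃f⦄' ∘ θ_{T',(Z,e)}`, and is the unique such morphism
(hence the unique bracket operation on `(T',α')`). -/
theorem transported_bracket_is_unique_bracket (S : Signature C) (hss : HSS S)
    (T' : C ⥤ C) (η' : 𝟭 C ⟶ T') (τ' : S.H.obj T' ⟶ T')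
    (β : hss.T ≅ T')
    (hβη : hss.η ≫ β.hom = η')
    (hβτ : hss.τ ≫ β.hom = S.H.map β.hom ≫ τ')
    (Z : Ptd C) (f : Z.Z ⟶ T') (hf : Z.e ≫ f = η')
    (hg : Z.e ≫ (f ≫ β.inv) = hss.η) :
    (Functor.whiskerLeft Z.Z η' ≫ transportedBracket S hss β Z f hg = f) ∧
    (Functor.whiskerLeft Z.Z τ' ≫ transportedBracket S hss β Z f hg =
      S.θ T' Z ≫ S.H.map (transportedBracket S hss β Z f hg) ≫ τ') ∧
    (∀ h : Z.Z ⋙ T' ⟶ T',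
      Functor.whiskerLeft Z.Z η' ≫ h = f →
      Functor.whiskerLeft Z.Z τ' ≫ h = S.θ T' Z ≫ S.H.map h ≫ τ' →
      h = transportedBracket S hss β Z f hg) := by

  have hηinv : η' ≫ β.inv = hss.η := by rw [← hβη, Category.assoc, β.hom_inv_id, Category.comp_id]
  have hτinv : τ' ≫ β.inv = S.H.map β.inv ≫ hss.τ := by
    rw [← cancel_epi (S.H.map β.hom), ← Category.assoc, ← hβτ, Category.assoc, β.hom_inv_id,
      Category.comp_id, ← Category.assoc, ← S.H.map_comp, β.hom_inv_id, S.H.map_id,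
      Category.id_comp]
  have hτ' : hss.τ ≫ β.hom = S.H.map β.hom ≫ τ' := hβτ
  set b := hss.bracket Z (f ≫ β.inv) hg with hb
  have hnat := S.θ_nat_X β.inv Z
  have hnat' := S.θ_nat_X β.hom Z
  refine ⟨?_, ?_, ?_⟩
  · simp only [transportedBracket, ← Category.assoc, ← Functor.whiskerLeft_comp, hηinv]
    rw [Category.assoc, ← Category.assoc, hss.bracket_η Z (f ≫ β.inv) hg]
    simp
  · simp only [transportedBracket, ← Category.assoc, ← Functor.whiskerLeft_comp, hτinv]
    rw [Functor.whiskerLeft_comp]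
    slice_lhs 2 3 => rw [hss.bracket_τ Z (f ≫ β.inv) hg]
    slice_lhs 1 2 => rw [hnat]
    simp only [Category.assoc]
    rw [hτ']
    simp [S.H.map_comp]
  · intro h h1 h2
    have h2' := reassoc_of% h2
    have key : Functor.whiskerLeft Z.Z β.hom ≫ h ≫ β.inv = b := by
      apply hss.bracket_unique
      · rw [← Category.assoc, ← Functor.whiskerLeft_comp, hβη, ← Category.assoc, h1]
      · rw [← Category.assoc, ← Functor.whiskerLeft_comp, hβτ, Functor.whiskerLeft_comp, Category.assoc, h2']
        slice_lhs 1 2 => rw [hnat']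
        slice_lhs 4 5 => rw [hτinv]
        simp [S.H.map_comp]
    rw [transportedBracket, ← hb, ← key]
    rw [Category.assoc, Category.assoc, β.inv_hom_id, Category.comp_id,
      ← Category.assoc, ← Functor.whiskerLeft_comp, β.inv_hom_id]
    simp
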